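/- Fix a commutative ring R, a nonzerodivisor π ∈ R, and integers q ≥ 2, r ≥ 1. Let B be the polynomial ring over R in the variables x_{i,j} (i ∈ ℕ, 1 ≤ j ≤ r) and, for each n, let B_n ⊆ B denote the R-subalgebra generated by {x_{i,j} : 0 ≤ i ≤ n, 1 ≤ j ≤ r}. Let ∂ : B → B be a map such that: ∂(1) = 0; ∂ maps the image of R in B into itself; π·∂(a+b) = π·∂(a) + π·∂(b) + (a^q + b^q − (a+b)^q) and ∂(ab) = a^q·∂(b) + b^q·∂(a) + π·∂(a)·∂(b) for all a, b ∈ B; ∂(B_n) ⊆ B_{n+1} for every n; and the associated Frobenius lift Ψ(b) := b^q + π·∂(b) satisfies Ψ(π·1) = π·1. Assume the ghost condition: for all n ≥ 0 and all j, Ψ^n(x_{0,j}) = Σ_{i=0}^n π^i · x_{i,j}^{q^{n−i}}. Then for every n ≥ 0 the family {∂^i(x_{0,j}) : 0 ≤ i ≤ n, 1 ≤ j ≤ r} is algebraically independent over R, and the R-subalgebra of B it generates equals B_n. -/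

import Mathlib

open MvPolynomial

/-- The "tail" `H i j = ∂^i(x_{0,j}) - x_{i,j}`. -/
private noncomputable def Ht {R : Type*} [CommRing R] {r : ℕ}
    (d : MvPolynomial (ℕ × Fin r) R → MvPolynomial (ℕ × Fin r) R) (i : ℕ) (j : Fin r) :
    MvPolynomial (ℕ × Fin r) R :=
  d^[i] (X (0, j)) - X (i, j)

/-- Stage-`i` approximation to the inverse substitution. -/
private noncomputable def Wt {R : Type*} [CommRing R] {r : ℕ}
    (d : MvPolynomial (ℕ × Fin r) R → MvPolynomial (ℕ × Fin r) R) :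
    ℕ → ℕ × Fin r → MvPolynomial (ℕ × Fin r) R
  | 0 => fun _ => 0
  | (i+1) => fun p => if p.1 = i then X p - aeval (Wt d i) (Ht d p.1 p.2) else Wt d i p

/-- The inverse substitution. -/
private noncomputable def wt {R : Type*} [CommRing R] {r : ℕ}
    (d : MvPolynomial (ℕ × Fin r) R → MvPolynomial (ℕ × Fin r) R) (p : ℕ × Fin r) :
    MvPolynomial (ℕ × Fin r) R :=
  X p - aeval (Wt d p.1) (Ht d p.1 p.2)

private lemma Wt_stab {R : Type*} [CommRing R] {r : ℕ}
    (d : MvPolynomial (ℕ × Fin r) R → MvPolynomial (ℕ × Fin r) R) :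
    ∀ i p, p.1 < i → Wt d i p = wt d p := by
  intro i
  induction i with
  | zero => intro p hp; omega
  | succ i ih =>
    intro p hp
    by_cases h : p.1 = i
    · show (if p.1 = i then X p - aeval (Wt d i) (Ht d p.1 p.2) else Wt d i p) = wt d p
      rw [if_pos h, wt, h]
    · show (if p.1 = i then X p - aeval (Wt d i) (Ht d p.1 p.2) else Wt d i p) = wt d p
      rw [if_neg h]
      exact ih p (by omega)

/-- Evaluation of a supported polynomial only depends on the values on the support set. -/
private lemma aeval_congr_supported {R : Type*} [CommRing R] {σ : Type*} {A : Type*}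
    [CommRing A] [Algebra R A] (s : Set σ) (f g : σ → A)
    (hfg : ∀ v ∈ s, f v = g v) {p : MvPolynomial σ R} (hp : p ∈ supported R s) :
    aeval f p = aeval g p := by
  have hle : supported R s ≤ AlgHom.equalizer (aeval (R := R) f) (aeval g) := by
    rw [supported_eq_adjoin_X]
    apply Algebra.adjoin_le
    rintro _ ⟨v, hv, rfl⟩
    simp only [SetLike.mem_coe, AlgHom.mem_equalizer, aeval_X]
    exact hfg v hv
  exact (AlgHom.mem_equalizer _ _ _).1 (hle hp)

theorem stmt_1 {R : Type*} [CommRing R] (π : R)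
    (hπ : ∀ a : R, π * a = 0 → a = 0)
    (q r : ℕ) (hq : 2 ≤ q) (hr : 1 ≤ r)
    (d : MvPolynomial (ℕ × Fin r) R → MvPolynomial (ℕ × Fin r) R)
    (hd1 : d 1 = 0)
    (hdR : ∀ a ∈ Set.range (algebraMap R (MvPolynomial (ℕ × Fin r) R)),
      d a ∈ Set.range (algebraMap R (MvPolynomial (ℕ × Fin r) R)))
    (hadd : ∀ a b : MvPolynomial (ℕ × Fin r) R,
      MvPolynomial.C π * d (a + b) =
        MvPolynomial.C π * d a + MvPolynomial.C π * d b + (a ^ q + b ^ q - (a + b) ^ q))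
    (hmul : ∀ a b : MvPolynomial (ℕ × Fin r) R,
      d (a * b) = a ^ q * d b + b ^ q * d a + MvPolynomial.C π * d a * d b)
    (hstep : ∀ n : ℕ, ∀ a ∈ Algebra.adjoin R
        {P : MvPolynomial (ℕ × Fin r) R | ∃ i ≤ n, ∃ j : Fin r, P = MvPolynomial.X (i, j)},
      d a ∈ Algebra.adjoin R
        {P : MvPolynomial (ℕ × Fin r) R | ∃ i ≤ n + 1, ∃ j : Fin r, P = MvPolynomial.X (i, j)})
    (hΨπ : (MvPolynomial.C π : MvPolynomial (ℕ × Fin r) R) ^ q +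
      MvPolynomial.C π * d (MvPolynomial.C π) = MvPolynomial.C π)
    (hghost : ∀ n : ℕ, ∀ j : Fin r,
      (fun b : MvPolynomial (ℕ × Fin r) R => b ^ q + MvPolynomial.C π * d b)^[n]
          (MvPolynomial.X ((0 : ℕ), j)) =
        ∑ i ∈ Finset.range (n + 1),
          MvPolynomial.C π ^ i * MvPolynomial.X ((i : ℕ), j) ^ q ^ (n - i)) :
    ∀ n : ℕ,
      AlgebraicIndependent R
        (fun P : Fin (n + 1) × Fin r => d^[(P.1 : ℕ)] (MvPolynomial.X ((0 : ℕ), P.2))) ∧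
      Algebra.adjoin R
        (Set.range fun P : Fin (n + 1) × Fin r =>
          d^[(P.1 : ℕ)] (MvPolynomial.X ((0 : ℕ), P.2))) =
      Algebra.adjoin R
        {P : MvPolynomial (ℕ × Fin r) R | ∃ i ≤ n, ∃ j : Fin r, P = MvPolynomial.X (i, j)} := by
  have hq0 : q ≠ 0 := by omega
  -- cancellation of `C π`
  have hCinj : ∀ f g : MvPolynomial (ℕ × Fin r) R, C π * f = C π * g → f = g := by
    intro f g h
    ext m
    have h1 : π * coeff m f = π * coeff m g := by
      have := congrArg (coeff m) h
      simpa [coeff_C_mul] using this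
    have h2 : π * (coeff m f - coeff m g) = 0 := by rw [mul_sub, h1, sub_self]
    exact sub_eq_zero.mp (hπ _ h2)
  -- saturation of supported subalgebras
  have hsat : ∀ (s : Set (ℕ × Fin r)) (f : MvPolynomial (ℕ × Fin r) R),
      C π * f ∈ supported R s → f ∈ supported R s := by
    intro s f hf
    rw [mem_supported] at hf ⊢
    intro v hv
    apply hf
    obtain ⟨m, hm, hvm⟩ := (mem_vars v).1 hv
    refine (mem_vars v).2 ⟨m, ?_, hvm⟩
    rw [mem_support_iff] at hm ⊢
    rw [coeff_C_mul]
    intro h0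
    exact hm (hπ _ h0)
  have hsatpow : ∀ (k : ℕ) (s : Set (ℕ × Fin r)) (f : MvPolynomial (ℕ × Fin r) R),
      C π ^ k * f ∈ supported R s → f ∈ supported R s := by
    intro k
    induction k with
    | zero => intro s f hf; simpa using hf
    | succ k ih =>
      intro s f hf
      have : C π ^ k * (C π * f) ∈ supported R s := by
        have : C (σ := ℕ × Fin r) π ^ (k + 1) * f = C π ^ k * (C π * f) := by ring
        rwa [this] at hf
      exact hsat s f (ih s (C π * f) this)
  -- the generating sets are the supported subalgebras
  have hadjoin_eq : ∀ m : ℕ,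
      Algebra.adjoin R {P : MvPolynomial (ℕ × Fin r) R | ∃ i ≤ m, ∃ j : Fin r, P = X (i, j)} =
        supported R {p : ℕ × Fin r | p.1 ≤ m} := by
    intro m
    rw [supported_eq_adjoin_X]
    congr 1
    ext P
    constructor
    · rintro ⟨i, hi, j, rfl⟩
      exact ⟨(i, j), hi, rfl⟩
    · rintro ⟨p, hp, rfl⟩
      exact ⟨p.1, hp, p.2, rfl⟩
  have hXmem : ∀ (m i : ℕ) (j : Fin r), i ≤ m →
      X (i, j) ∈ supported R {p : ℕ × Fin r | p.1 ≤ m} := by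
    intro m i j hi
    rw [supported_eq_adjoin_X]
    exact Algebra.subset_adjoin ⟨(i, j), hi, rfl⟩
  have hCmem : ∀ s : Set (ℕ × Fin r), (C π : MvPolynomial (ℕ × Fin r) R) ∈ supported R s := by
    intro s
    rw [← MvPolynomial.algebraMap_eq]
    exact Subalgebra.algebraMap_mem _ _
  -- the Frobenius lift as a ring homomorphism
  have hd0 : C π * d (0 : MvPolynomial (ℕ × Fin r) R) = 0 := by
    have h := hadd 0 0
    simp only [add_zero, zero_pow hq0, zero_add, sub_zero] at h
    have : C π * d (0 : MvPolynomial (ℕ × Fin r) R) -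
        (C π * d 0 + C π * d 0 + (0 + 0 - 0)) = 0 := by rw [← h]; ring
    have h2 : C π * d (0 : MvPolynomial (ℕ × Fin r) R) + (0 + 0 - 0) = 0 := by
      linear_combination -this
    simpa using h2
  let Ψ : MvPolynomial (ℕ × Fin r) R →+* MvPolynomial (ℕ × Fin r) R :=
    { toFun := fun b => b ^ q + C π * d b
      map_one' := by simp [hd1]
      map_mul' := by
        intro a b
        show (a * b) ^ q + C π * d (a * b) = (a ^ q + C π * d a) * (b ^ q + C π * d b)
        rw [hmul]
        ring
      map_zero' := by
        show (0 : MvPolynomial (ℕ × Fin r) R) ^ q + C π * d 0 = 0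
        rw [zero_pow hq0, hd0, add_zero]
      map_add' := by
        intro a b
        show (a + b) ^ q + C π * d (a + b) = (a ^ q + C π * d a) + (b ^ q + C π * d b)
        linear_combination hadd a b }
  have hΨ : ∀ b, Ψ b = b ^ q + C π * d b := fun _ => rfl
  have hΨC : Ψ (C π) = C π := hΨπ
  have hco : (⇑Ψ : MvPolynomial (ℕ × Fin r) R → MvPolynomial (ℕ × Fin r) R) =
      fun b => b ^ q + C π * d b := rfl
  have hghost' : ∀ m : ℕ, ∀ j : Fin r, (⇑Ψ)^[m] (X ((0 : ℕ), j)) =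
      ∑ i ∈ Finset.range (m + 1), C π ^ i * X ((i : ℕ), j) ^ q ^ (m - i) := by
    intro m j
    rw [hco]
    exact hghost m j
  -- d of a variable in slot m is the next variable plus something supported in slots ≤ m
  have hkey : ∀ (m : ℕ) (j : Fin r),
      d (X (m, j)) - X (m + 1, j) ∈ supported R {p : ℕ × Fin r | p.1 ≤ m} := by
    intro m j
    have e1 := hghost' (m + 1) j
    rw [Function.iterate_succ_apply', hghost' m j, map_sum] at e1
    simp only [map_mul, map_pow, hΨC] at e1
    simp only [hΨ] at e1
    rw [Finset.sum_range_succ] at e1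
    rw [Finset.sum_range_succ] at e1
    rw [Finset.sum_range_succ] at e1
    simp only [Nat.sub_self, pow_zero, pow_one, Nat.add_sub_cancel_left, Nat.add_sub_cancel] at e1
    have e2 : C π ^ (m + 1) * (d (X ((m : ℕ), j)) - X (((m + 1 : ℕ)), j)) =
        ∑ i ∈ Finset.range m, (C π ^ i * X ((i : ℕ), j) ^ q ^ (m + 1 - i) -
          C π ^ i * (X ((i : ℕ), j) ^ q + C π * d (X ((i : ℕ), j))) ^ q ^ (m - i)) := by
      rw [Finset.sum_sub_distrib]
      linear_combination e1
    have e3 : (∑ i ∈ Finset.range m, (C π ^ i * X ((i : ℕ), j) ^ q ^ (m + 1 - i) -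
        C π ^ i * (X ((i : ℕ), j) ^ q + C π * d (X ((i : ℕ), j))) ^ q ^ (m - i))) ∈
          supported R {p : ℕ × Fin r | p.1 ≤ m} := by
      apply Subalgebra.sum_mem
      intro i hi
      rw [Finset.mem_range] at hi
      have hX : X ((i : ℕ), j) ∈ supported R {p : ℕ × Fin r | p.1 ≤ m} :=
        hXmem m i j (by omega)
      have hdX : d (X ((i : ℕ), j)) ∈ supported R {p : ℕ × Fin r | p.1 ≤ m} := by
        have h1 : X ((i : ℕ), j) ∈ Algebra.adjoin R
            {P : MvPolynomial (ℕ × Fin r) R | ∃ i' ≤ i, ∃ j' : Fin r, P = X (i', j')} :=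
          Algebra.subset_adjoin ⟨i, le_refl i, j, rfl⟩
        have h2 := hstep i _ h1
        rw [hadjoin_eq (i + 1)] at h2
        refine supported_mono ?_ h2
        intro p hp
        simp only [Set.mem_setOf_eq] at hp ⊢
        omega
      exact sub_mem
        (mul_mem (pow_mem (hCmem _) i) (pow_mem hX _))
        (mul_mem (pow_mem (hCmem _) i)
          (pow_mem (add_mem (pow_mem hX q) (mul_mem (hCmem _) hdX)) _))
    rw [← e2] at e3
    exact hsatpow (m + 1) _ _ e3
  -- the tails
  have hH0 : ∀ j : Fin r, Ht d 0 j = 0 := by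
    intro j
    simp [Ht]
  have hHy : ∀ (i : ℕ) (j : Fin r), d^[i] (X ((0 : ℕ), j)) = X ((i : ℕ), j) + Ht d i j := by
    intro i j
    rw [Ht]
    ring
  have hHsucc : ∀ (i : ℕ) (j : Fin r),
      Ht d (i + 1) j ∈ supported R {p : ℕ × Fin r | p.1 ≤ i} := by
    intro i
    induction i with
    | zero =>
      intro j
      have : Ht d 1 j = d (X ((0 : ℕ), j)) - X ((1 : ℕ), j) := by
        rw [Ht, Function.iterate_one]
      rw [this]
      exact hkey 0 j
    | succ i ih =>
      intro j
      have hh := ih j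
      set h := Ht d (i + 1) j with hh_def
      have hXh : d^[i + 1] (X ((0 : ℕ), j)) = X ((i + 1 : ℕ), j) + h := hHy (i + 1) j
      have hu := hadd (X ((i + 1 : ℕ), j)) h
      set u := d (X ((i + 1 : ℕ), j)) + d h - d (X ((i + 1 : ℕ), j) + h) with hu_def
      have hXmem' : X ((i + 1 : ℕ), j) ∈ supported R {p : ℕ × Fin r | p.1 ≤ i + 1} :=
        hXmem (i + 1) (i + 1) j (le_refl _)
      have hhmem : h ∈ supported R {p : ℕ × Fin r | p.1 ≤ i + 1} := by
        refine supported_mono ?_ hh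
        intro p hp
        simp only [Set.mem_setOf_eq] at hp ⊢
        omega
      have hCu : C π * u = (X ((i + 1 : ℕ), j) + h) ^ q - X ((i + 1 : ℕ), j) ^ q - h ^ q := by
        rw [hu_def]
        linear_combination -hu
      have humem : u ∈ supported R {p : ℕ × Fin r | p.1 ≤ i + 1} := by
        apply hsat
        rw [hCu]
        exact sub_mem (sub_mem (pow_mem (add_mem hXmem' hhmem) q) (pow_mem hXmem' q))
          (pow_mem hhmem q)
      have hdh : d h ∈ supported R {p : ℕ × Fin r | p.1 ≤ i + 1} := by
        have h1 : h ∈ Algebra.adjoin R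
            {P : MvPolynomial (ℕ × Fin r) R | ∃ i' ≤ i, ∃ j' : Fin r, P = X (i', j')} := by
          rw [hadjoin_eq i]
          exact hh
        have h2 := hstep i _ h1
        rwa [hadjoin_eq (i + 1)] at h2
      have hexp : Ht d (i + 1 + 1) j = (d (X ((i + 1 : ℕ), j)) - X ((i + 1 + 1 : ℕ), j)) +
          d h - u := by
        rw [Ht, Function.iterate_succ_apply', hXh, hu_def]
        ring
      rw [hexp]
      exact sub_mem (add_mem (hkey (i + 1) j) hdh) humem
  -- the inverse substitution inverts the tails
  have hwt : ∀ p : ℕ × Fin r,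
      aeval (Wt d p.1) (Ht d p.1 p.2) = aeval (wt d) (Ht d p.1 p.2) := by
    rintro ⟨i, j⟩
    cases i with
    | zero => simp [hH0 j]
    | succ i =>
      exact aeval_congr_supported {p : ℕ × Fin r | p.1 ≤ i} _ _
        (fun v hv => Wt_stab d (i + 1) v (by exact Nat.lt_succ_of_le hv)) (hHsucc i j)
  have hψX : ∀ p : ℕ × Fin r,
      aeval (R := R) (wt d) (X p) = X p - aeval (wt d) (Ht d p.1 p.2) := by
    intro p
    rw [aeval_X, ← hwt p, wt]
  have hψy : ∀ p : ℕ × Fin r, aeval (wt d) (d^[p.1] (X ((0 : ℕ), p.2))) = X p := by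
    rintro ⟨i, j⟩
    have : d^[i] (X ((0 : ℕ), j)) = X ((i : ℕ), j) + Ht d i j := hHy i j
    rw [this, map_add, hψX (i, j)]
    ring
  -- main statement
  intro n
  constructor
  · -- algebraic independence
    rw [algebraicIndependent_iff_injective_aeval]
    set g : Fin (n + 1) × Fin r → MvPolynomial (ℕ × Fin r) R :=
      fun P => d^[(P.1 : ℕ)] (X ((0 : ℕ), P.2)) with hg
    set emb : Fin (n + 1) × Fin r → ℕ × Fin r := fun k => ((k.1 : ℕ), k.2) with hemb_def
    have hemb : Function.Injective emb := by
      rintro ⟨a, b⟩ ⟨c, e⟩ hac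
      simp only [hemb_def, Prod.mk.injEq] at hac
      ext
      · exact hac.1
      · exact congrArg Fin.val hac.2
    have hcomp : (aeval (wt d)).comp (aeval g) =
        (rename emb : MvPolynomial (Fin (n + 1) × Fin r) R →ₐ[R] MvPolynomial (ℕ × Fin r) R) := by
      apply MvPolynomial.algHom_ext
      intro k
      simp only [AlgHom.comp_apply, aeval_X, rename_X]
      exact hψy ((k.1 : ℕ), k.2)
    intro p1 p2 hp
    have h1 : rename emb p1 = rename emb p2 := by
      rw [← hcomp]
      simp only [AlgHom.comp_apply]
      rw [hp]
    exact rename_injective emb hemb h1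
  · -- generation
    rw [hadjoin_eq n]
    apply le_antisymm
    · apply Algebra.adjoin_le
      rintro _ ⟨k, rfl⟩
      show d^[(k.1 : ℕ)] (X ((0 : ℕ), k.2)) ∈ supported R {p : ℕ × Fin r | p.1 ≤ n}
      rw [hHy (k.1 : ℕ) k.2]
      have hkn : (k.1 : ℕ) ≤ n := Nat.lt_succ_iff.mp k.1.isLt
      refine add_mem (hXmem n _ k.2 hkn) ?_
      cases hk1 : (k.1 : ℕ) with
      | zero =>
        rw [hH0]
        exact zero_mem _
      | succ m =>
        refine supported_mono ?_ (hHsucc m k.2)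
        intro p hp
        simp only [Set.mem_setOf_eq] at hp ⊢
        omega
    · have hgen2 : ∀ i : ℕ, i ≤ n → ∀ j : Fin r, X ((i : ℕ), j) ∈
          Algebra.adjoin R (Set.range fun P : Fin (n + 1) × Fin r =>
            d^[(P.1 : ℕ)] (X ((0 : ℕ), P.2))) := by
        intro i
        induction i using Nat.strong_induction_on with
        | _ i ih =>
          intro hin j
          have hy : d^[i] (X ((0 : ℕ), j)) ∈ Algebra.adjoin R
              (Set.range fun P : Fin (n + 1) × Fin r =>
                d^[(P.1 : ℕ)] (X ((0 : ℕ), P.2))) := by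
            apply Algebra.subset_adjoin
            exact ⟨(⟨i, by omega⟩, j), rfl⟩
          have hXi : X ((i : ℕ), j) = d^[i] (X ((0 : ℕ), j)) - Ht d i j := by
            rw [Ht]; ring
          rw [hXi]
          refine sub_mem hy ?_
          cases i with
          | zero =>
            rw [hH0]
            exact zero_mem _
          | succ m =>
            have hm : supported R {p : ℕ × Fin r | p.1 ≤ m} ≤
                Algebra.adjoin R (Set.range fun P : Fin (n + 1) × Fin r =>
                  d^[(P.1 : ℕ)] (X ((0 : ℕ), P.2))) := by
              rw [supported_eq_adjoin_X]
              apply Algebra.adjoin_le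
              rintro _ ⟨p, hp, rfl⟩
              simp only [Set.mem_setOf_eq] at hp
              have := ih p.1 (by omega) (by omega) p.2
              simpa using this
            exact hm (hHsucc m j)
      rw [supported_eq_adjoin_X]
      apply Algebra.adjoin_le
      rintro _ ⟨p, hp, rfl⟩
      have := hgen2 p.1 hp p.2
      simpa using this
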